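/- Under the discount-update hypotheses (γ ∈ (0,1), K ∈ S_γ with J_γ(K) > ℓ₀, Ĵ ∈ ℝ with |J_γ(K) − Ĵ| ≤ J_γ(K)/2, ζ ∈ (0,1), α = ℓ₀/(2Ĵ − ℓ₀), γ' = (1 + ζα)γ), it holds that √γ'·ρ(A − BKC) < 1. -/

import Mathlib

open Matrix

noncomputable section

/-- Spectral radius of a real square matrix: the largest modulus of a complex eigenvalue. -/
def specRad {n : ℕ} (M : Matrix (Fin n) (Fin n) ℝ) : ℝ :=
  sSup {r : ℝ | ∃ μ ∈ spectrum ℂ (M.map (algebraMap ℝ ℂ)), r = ‖μ‖}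

/-- Spectral (ℓ²→ℓ² operator) norm of a real matrix. -/
def spNorm {a b : ℕ} (M : Matrix (Fin a) (Fin b) ℝ) : ℝ :=
  ‖LinearMap.toContinuousLinearMap (Matrix.toEuclideanLin M)‖

/-- Frobenius norm of a real matrix. -/
def frobNorm {a b : ℕ} (M : Matrix (Fin a) (Fin b) ℝ) : ℝ :=
  Real.sqrt (∑ i, ∑ j, (M i j) ^ 2)

/-- Euclidean norm of a vector. -/
def vecNorm {a : ℕ} (x : Fin a → ℝ) : ℝ :=
  Real.sqrt (∑ i, (x i) ^ 2)

variable {n m p : ℕ}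

/-- Closed-loop matrix `A - BKC`. -/
def Acl (A : Matrix (Fin n) (Fin n) ℝ) (B : Matrix (Fin n) (Fin m) ℝ)
    (C : Matrix (Fin p) (Fin n) ℝ) (K : Matrix (Fin m) (Fin p) ℝ) : Matrix (Fin n) (Fin n) ℝ :=
  A - B * K * C

/-- Membership in the stabilizing set `S_γ`: `√γ · ρ(A − BKC) < 1`. -/
def inS (A : Matrix (Fin n) (Fin n) ℝ) (B : Matrix (Fin n) (Fin m) ℝ)
    (C : Matrix (Fin p) (Fin n) ℝ) (γ : ℝ) (K : Matrix (Fin m) (Fin p) ℝ) : Prop :=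
  Real.sqrt γ * specRad (Acl A B C K) < 1

/-- The solution `P_K(γ) = Σ_{t} γ^t ((A−BKC)ᵀ)^t (Q + CᵀKᵀRKC) (A−BKC)^t` of the
discounted Lyapunov equation. -/
def Pmat (A : Matrix (Fin n) (Fin n) ℝ) (B : Matrix (Fin n) (Fin m) ℝ)
    (C : Matrix (Fin p) (Fin n) ℝ) (Q : Matrix (Fin n) (Fin n) ℝ) (R : Matrix (Fin m) (Fin m) ℝ)
    (γ : ℝ) (K : Matrix (Fin m) (Fin p) ℝ) : Matrix (Fin n) (Fin n) ℝ :=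
  ∑' t : ℕ, γ ^ t • ((Acl A B C K)ᵀ ^ t * (Q + Cᵀ * Kᵀ * R * K * C) * (Acl A B C K) ^ t)

/-- The Gramian `Σ_K(γ) = Σ_{t} γ^t (A−BKC)^t ((A−BKC)ᵀ)^t`. -/
def Smat (A : Matrix (Fin n) (Fin n) ℝ) (B : Matrix (Fin n) (Fin m) ℝ)
    (C : Matrix (Fin p) (Fin n) ℝ) (γ : ℝ) (K : Matrix (Fin m) (Fin p) ℝ) :
    Matrix (Fin n) (Fin n) ℝ :=
  ∑' t : ℕ, γ ^ t • ((Acl A B C K) ^ t * ((Acl A B C K)ᵀ) ^ t)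

/-- The discounted cost `J_γ(K) = Tr(P_K(γ))`. -/
def Jcost (A : Matrix (Fin n) (Fin n) ℝ) (B : Matrix (Fin n) (Fin m) ℝ)
    (C : Matrix (Fin p) (Fin n) ℝ) (Q : Matrix (Fin n) (Fin n) ℝ) (R : Matrix (Fin m) (Fin m) ℝ)
    (γ : ℝ) (K : Matrix (Fin m) (Fin p) ℝ) : ℝ :=
  (Pmat A B C Q R γ K).trace

/-- `E_K = (R + γBᵀP_K(γ)B)KC − γBᵀP_K(γ)A`. -/
def Egrad (A : Matrix (Fin n) (Fin n) ℝ) (B : Matrix (Fin n) (Fin m) ℝ)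
    (C : Matrix (Fin p) (Fin n) ℝ) (Q : Matrix (Fin n) (Fin n) ℝ) (R : Matrix (Fin m) (Fin m) ℝ)
    (γ : ℝ) (K : Matrix (Fin m) (Fin p) ℝ) : Matrix (Fin m) (Fin n) ℝ :=
  (R + γ • (Bᵀ * Pmat A B C Q R γ K * B)) * K * C - γ • (Bᵀ * Pmat A B C Q R γ K * A)

/-- The closed-form gradient `∇J_γ(K) = 2 E_K Σ_K(γ) Cᵀ`. -/
def gradJ (A : Matrix (Fin n) (Fin n) ℝ) (B : Matrix (Fin n) (Fin m) ℝ)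
    (C : Matrix (Fin p) (Fin n) ℝ) (Q : Matrix (Fin n) (Fin n) ℝ) (R : Matrix (Fin m) (Fin m) ℝ)
    (γ : ℝ) (K : Matrix (Fin m) (Fin p) ℝ) : Matrix (Fin m) (Fin p) ℝ :=
  (2 : ℝ) • (Egrad A B C Q R γ K * Smat A B C γ K * Cᵀ)

end

section AuxStmt13

open Matrix

private lemma eig_norm_sq_le {k : ℕ} (M : Matrix (Fin k) (Fin k) ℝ) {μ : ℂ}
    (hμ : μ ∈ spectrum ℂ (M.map (algebraMap ℝ ℂ))) :
    ‖μ‖ ^ 2 ≤ ∑ i, ∑ j, (M i j) ^ 2 := by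
  set Mc := M.map (algebraMap ℝ ℂ) with hMc
  rw [spectrum.mem_iff] at hμ
  have hdet : (algebraMap ℂ (Matrix (Fin k) (Fin k) ℂ) μ - Mc).det = 0 := by
    by_contra h
    exact hμ ((Matrix.isUnit_iff_isUnit_det _).mpr (isUnit_iff_ne_zero.mpr h))
  obtain ⟨v, hv0, hv⟩ := (Matrix.exists_mulVec_eq_zero_iff).mpr hdet
  have hMv : Mc *ᵥ v = μ • v := by
    rw [Matrix.sub_mulVec] at hv
    have h1 : (algebraMap ℂ (Matrix (Fin k) (Fin k) ℂ) μ) *ᵥ v = μ • v := by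
      rw [Algebra.algebraMap_eq_smul_one, Matrix.smul_mulVec, Matrix.one_mulVec]
    rw [h1] at hv
    linear_combination (norm := module) -hv
  set S := ∑ j, ‖v j‖ ^ 2 with hS
  have hSpos : 0 < S := by
    obtain ⟨j, hj⟩ := Function.ne_iff.mp hv0
    apply Finset.sum_pos' (fun i _ => by positivity)
      ⟨j, Finset.mem_univ j, pow_pos (norm_pos_iff.mpr hj) 2⟩
  have key : ∀ i, ‖(Mc *ᵥ v) i‖ ^ 2 ≤ (∑ j, ‖Mc i j‖ ^ 2) * S := by
    intro i
    have h1 : ‖(Mc *ᵥ v) i‖ ≤ ∑ j, ‖Mc i j‖ * ‖v j‖ := by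
      rw [Matrix.mulVec, dotProduct]
      exact (norm_sum_le _ _).trans (le_of_eq (by simp [norm_mul]))
    calc ‖(Mc *ᵥ v) i‖ ^ 2 ≤ (∑ j, ‖Mc i j‖ * ‖v j‖) ^ 2 := by
          exact pow_le_pow_left₀ (norm_nonneg _) h1 2
      _ ≤ (∑ j, ‖Mc i j‖ ^ 2) * S := Finset.sum_mul_sq_le_sq_mul_sq _ _ _
  have hsum : ‖μ‖ ^ 2 * S ≤ (∑ i, ∑ j, ‖Mc i j‖ ^ 2) * S := by
    calc ‖μ‖ ^ 2 * S = ∑ i, ‖(Mc *ᵥ v) i‖ ^ 2 := by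
          rw [hMv]
          simp [hS, Pi.smul_apply, norm_smul, mul_pow, Finset.mul_sum]
      _ ≤ ∑ i, (∑ j, ‖Mc i j‖ ^ 2) * S := Finset.sum_le_sum (fun i _ => key i)
      _ = (∑ i, ∑ j, ‖Mc i j‖ ^ 2) * S := by rw [Finset.sum_mul]
  have h2 : ‖μ‖ ^ 2 ≤ ∑ i, ∑ j, ‖Mc i j‖ ^ 2 := le_of_mul_le_mul_right hsum hSpos
  refine h2.trans (le_of_eq ?_)
  refine Finset.sum_congr rfl fun i _ => Finset.sum_congr rfl fun j _ => ?_
  simp [hMc, Matrix.map_apply, Complex.norm_real, sq_abs]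

private lemma spectrum_nonempty' {k : ℕ} (hk : 1 ≤ k) (M : Matrix (Fin k) (Fin k) ℂ) :
    (spectrum ℂ M).Nonempty := by
  haveI : Nonempty (Fin k) := ⟨⟨0, hk⟩⟩
  rw [← AlgEquiv.spectrum_eq (Matrix.toLinAlgEquiv (Pi.basisFun ℂ (Fin k)))]
  obtain ⟨μ, hμ⟩ := Module.End.exists_eigenvalue ((Matrix.toLinAlgEquiv (Pi.basisFun ℂ (Fin k))) M)
  exact ⟨μ, hμ.mem_spectrum⟩

private lemma specRad_spec {k : ℕ} (hk : 1 ≤ k) (M : Matrix (Fin k) (Fin k) ℝ) :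
    ∃ μ ∈ spectrum ℂ (M.map (algebraMap ℝ ℂ)), ‖μ‖ = specRad M := by
  have hset : {r : ℝ | ∃ μ ∈ spectrum ℂ (M.map (algebraMap ℝ ℂ)), r = ‖μ‖}
      = (fun μ => ‖μ‖) '' spectrum ℂ (M.map (algebraMap ℝ ℂ)) := by
    ext r; simp [eq_comm, Set.mem_image]
  have hfin : {r : ℝ | ∃ μ ∈ spectrum ℂ (M.map (algebraMap ℝ ℂ)), r = ‖μ‖}.Finite := by
    rw [hset]; exact (Matrix.finite_spectrum _).image _
  have hne : {r : ℝ | ∃ μ ∈ spectrum ℂ (M.map (algebraMap ℝ ℂ)), r = ‖μ‖}.Nonempty := by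
    obtain ⟨μ, hμ⟩ := spectrum_nonempty' hk (M.map (algebraMap ℝ ℂ))
    exact ⟨‖μ‖, μ, hμ, rfl⟩
  obtain ⟨μ, hμ, hμr⟩ := hne.csSup_mem hfin
  exact ⟨μ, hμ, hμr.symm⟩

private lemma specRad_pow_le {k : ℕ} (hk : 1 ≤ k) (L : Matrix (Fin k) (Fin k) ℝ) (t : ℕ) :
    (specRad L ^ t) ^ 2 ≤ ∑ i, ∑ j, ((L ^ t) i j) ^ 2 := by
  obtain ⟨μ, hμ, hμr⟩ := specRad_spec hk L
  have hpow : μ ^ t ∈ spectrum ℂ ((L ^ t).map (algebraMap ℝ ℂ)) := by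
    have h1 := spectrum.pow_image_subset (𝕜 := ℂ) (L.map (algebraMap ℝ ℂ)) t ⟨μ, hμ, rfl⟩
    have h2 : (L.map (algebraMap ℝ ℂ)) ^ t = (L ^ t).map (algebraMap ℝ ℂ) := by
      simpa [RingHom.mapMatrix_apply] using (map_pow ((algebraMap ℝ ℂ).mapMatrix) L t).symm
    rwa [h2] at h1
  have h3 := eig_norm_sq_le (L ^ t) hpow
  calc (specRad L ^ t) ^ 2 = ‖μ ^ t‖ ^ 2 := by rw [← hμr, norm_pow]
    _ ≤ _ := h3

private lemma smul_one_psd {k : ℕ} {c : ℝ} (hc : 0 ≤ c) :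
    (c • (1 : Matrix (Fin k) (Fin k) ℝ)).PosSemidef := by
  rw [Matrix.smul_one_eq_diagonal]
  exact Matrix.posSemidef_diagonal_iff.mpr fun i => hc

private lemma psd_trace_nonneg {k : ℕ} {M : Matrix (Fin k) (Fin k) ℝ} (h : M.PosSemidef) :
    0 ≤ M.trace := by
  rw [Matrix.trace]
  refine Finset.sum_nonneg fun i _ => ?_
  exact h.diag_nonneg

private lemma trace_conj_ge {k : ℕ} {Mq : Matrix (Fin k) (Fin k) ℝ} {c : ℝ}
    (hpsd : (Mq - c • 1).PosSemidef) (X : Matrix (Fin k) (Fin k) ℝ) :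
    c * ∑ i, ∑ j, (X i j) ^ 2 ≤ (Xᵀ * Mq * X).trace := by
  have h1 : (Xᵀ * (Mq - c • 1) * X).PosSemidef := by
    have h := hpsd.conjTranspose_mul_mul_same X
    rwa [Matrix.conjTranspose_eq_transpose_of_trivial] at h
  have h2 := psd_trace_nonneg h1
  have h3 : Xᵀ * (Mq - c • 1) * X = Xᵀ * Mq * X - c • (Xᵀ * X) := by
    rw [Matrix.mul_sub, Matrix.sub_mul]
    congr 1
    rw [Matrix.mul_smul, Matrix.mul_one, Matrix.smul_mul]
  have h4 : (Xᵀ * X).trace = ∑ i, ∑ j, (X i j) ^ 2 := by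
    rw [Matrix.trace]
    simp only [Matrix.diag_apply, Matrix.mul_apply, Matrix.transpose_apply]
    rw [Finset.sum_comm]
    simp [sq]
  rw [h3, Matrix.trace_sub, Matrix.trace_smul, smul_eq_mul, h4] at h2
  linarith

end AuxStmt13

/-- after the discount update `γ' = (1 + ζα)γ`, `α = ℓ₀/(2Jhat − ℓ₀)`,
the gain `K` remains damped-stabilizing: `√γ'·ρ(A − BKC) < 1`. -/


theorem stmt13
    {n m p : ℕ} (hn : 1 ≤ n) (hm : 1 ≤ m) (hp : 1 ≤ p)
    (A : Matrix (Fin n) (Fin n) ℝ) (B : Matrix (Fin n) (Fin m) ℝ) (C : Matrix (Fin p) (Fin n) ℝ)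
    (Q : Matrix (Fin n) (Fin n) ℝ) (R : Matrix (Fin m) (Fin m) ℝ)
    (hQsymm : Q.IsSymm) (hRsymm : R.IsSymm)
    (ℓ₀ ℓ₁ ψ φ : ℝ) (hℓ₀ : 0 < ℓ₀) (hℓ₀₁ : ℓ₀ ≤ ℓ₁) (hψ : 1 ≤ ψ) (hφ : 1 ≤ φ)
    (hQlb : (Q - ℓ₀ • (1 : Matrix (Fin n) (Fin n) ℝ)).PosSemidef)
    (hQub : (ℓ₁ • (1 : Matrix (Fin n) (Fin n) ℝ) - Q).PosSemidef)
    (hRlb : (R - ℓ₀ • (1 : Matrix (Fin m) (Fin m) ℝ)).PosSemidef)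
    (hRub : (ℓ₁ • (1 : Matrix (Fin m) (Fin m) ℝ) - R).PosSemidef)
    (hB : spNorm B ≤ ψ) (hC : spNorm C ≤ φ)
    (γ : ℝ) (hγ : γ ∈ Set.Ioo (0 : ℝ) 1)
    (K : Matrix (Fin m) (Fin p) ℝ) (hK : inS A B C γ K)
    (hJ : ℓ₀ < Jcost A B C Q R γ K)
    (Jhat : ℝ) (hJhat : |Jcost A B C Q R γ K - Jhat| ≤ Jcost A B C Q R γ K / 2)
    (ζ : ℝ) (hζ : ζ ∈ Set.Ioo (0 : ℝ) 1)
    (γ' : ℝ) (hγ' : γ' = (1 + ζ * (ℓ₀ / (2 * Jhat - ℓ₀))) * γ) :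
    Real.sqrt γ' * specRad (Acl A B C K) < 1 := by
  classical
  have hγ0 : (0:ℝ) < γ := hγ.1
  obtain ⟨μ₀, hμ₀, hμ₀r⟩ := specRad_spec hn (Acl A B C K)
  have hr0 : 0 ≤ specRad (Acl A B C K) := hμ₀r ▸ norm_nonneg μ₀
  have hK' : Real.sqrt γ * specRad (Acl A B C K) < 1 := hK
  set r := specRad (Acl A B C K) with hrdef
  clear_value r
  clear hμ₀ hμ₀r
  have hx1 : γ * r ^ 2 < 1 := by
    have h1 : Real.sqrt γ * r < 1 := hK'
    nlinarith [Real.sq_sqrt hγ0.le, Real.sqrt_nonneg γ, mul_nonneg (Real.sqrt_nonneg γ) hr0]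
  have hx0 : 0 ≤ γ * r ^ 2 := mul_nonneg hγ0.le (sq_nonneg r)
  have hMq : ((Q + Cᵀ * Kᵀ * R * K * C) - ℓ₀ • 1).PosSemidef := by
    have hR : R.PosSemidef := by
      have h := hRlb.add (smul_one_psd (k := m) hℓ₀.le)
      simpa using h
    have hconj : (Cᵀ * Kᵀ * R * K * C).PosSemidef := by
      have h := hR.conjTranspose_mul_mul_same (K * C)
      rw [Matrix.conjTranspose_eq_transpose_of_trivial, Matrix.transpose_mul] at h
      simpa [Matrix.mul_assoc] using h
    have h := hQlb.add hconj
    have heq : Q + Cᵀ * Kᵀ * R * K * C - ℓ₀ • 1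
        = (Q - ℓ₀ • 1) + Cᵀ * Kᵀ * R * K * C := by abel
    rw [heq]; exact h
  set f : ℕ → Matrix (Fin n) (Fin n) ℝ :=
    fun t => γ ^ t • ((Acl A B C K)ᵀ ^ t * (Q + Cᵀ * Kᵀ * R * K * C) * (Acl A B C K) ^ t)
    with hfdef
  have hJf : Jcost A B C Q R γ K = (∑' t, f t).trace := rfl
  by_cases hsum : Summable f
  · set tr : Matrix (Fin n) (Fin n) ℝ →L[ℝ] ℝ :=
      LinearMap.toContinuousLinearMap (Matrix.traceLinearMap (Fin n) ℝ ℝ) with htrdef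
    have htr : ∀ M : Matrix (Fin n) (Fin n) ℝ, tr M = M.trace := fun _ => rfl
    have hmap : (∑' t, f t).trace = ∑' t, (f t).trace := by
      have h := tr.map_tsum hsum
      simpa [htr] using h
    have hgsum : Summable fun t => (f t).trace := by
      have h := hsum.map tr tr.continuous
      exact h
    have hterm : ∀ t, ℓ₀ * (γ * r ^ 2) ^ t ≤ (f t).trace := by
      intro t
      have h1 : (f t).trace
          = γ ^ t * ((Acl A B C K)ᵀ ^ t * (Q + Cᵀ * Kᵀ * R * K * C) * (Acl A B C K) ^ t).trace := by
        rw [hfdef]; simp [Matrix.trace_smul, smul_eq_mul]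
      have h2 := trace_conj_ge hMq ((Acl A B C K) ^ t)
      have h3 := specRad_pow_le hn (Acl A B C K) t
      rw [← hrdef] at h3
      have h4 : (Acl A B C K)ᵀ ^ t = ((Acl A B C K) ^ t)ᵀ := (Matrix.transpose_pow _ _).symm
      have h5 : ℓ₀ * (r ^ t) ^ 2
          ≤ ((Acl A B C K)ᵀ ^ t * (Q + Cᵀ * Kᵀ * R * K * C) * (Acl A B C K) ^ t).trace := by
        rw [h4]
        exact le_trans (mul_le_mul_of_nonneg_left h3 hℓ₀.le) h2
      calc ℓ₀ * (γ * r ^ 2) ^ t = γ ^ t * (ℓ₀ * (r ^ t) ^ 2) := by ring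
        _ ≤ γ ^ t * ((Acl A B C K)ᵀ ^ t * (Q + Cᵀ * Kᵀ * R * K * C) * (Acl A B C K) ^ t).trace :=
            mul_le_mul_of_nonneg_left h5 (pow_nonneg hγ0.le t)
        _ = (f t).trace := h1.symm
    have hgeo : Summable fun t : ℕ => ℓ₀ * (γ * r ^ 2) ^ t :=
      (summable_geometric_of_lt_one hx0 hx1).mul_left _
    have hts : ℓ₀ * (1 - γ * r ^ 2)⁻¹ ≤ Jcost A B C Q R γ K := by
      rw [hJf, hmap]
      calc ℓ₀ * (1 - γ * r ^ 2)⁻¹ = ∑' t : ℕ, ℓ₀ * (γ * r ^ 2) ^ t := by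
            rw [tsum_mul_left, tsum_geometric_of_lt_one hx0 hx1]
        _ ≤ ∑' t, (f t).trace := hgeo.tsum_le_tsum hterm hgsum
    generalize hJg : Jcost A B C Q R γ K = J at hts hJ hJhat
    clear_value f tr
    clear htr hmap hgsum hterm hgeo hJf hsum hfdef htrdef tr f
    have hJ0 : 0 < J := lt_trans hℓ₀ hJ
    have h1x : 0 < 1 - γ * r ^ 2 := by linarith
    have hJl : ℓ₀ ≤ J * (1 - γ * r ^ 2) := by
      have h := mul_le_mul_of_nonneg_right hts h1x.le
      rwa [inv_mul_cancel_right₀ h1x.ne'] at h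
    obtain ⟨habs1, habs2⟩ := abs_le.mp hJhat
    have hhat : J / 2 ≤ Jhat := by linarith
    have hden : 0 < 2 * Jhat - ℓ₀ := by linarith
    have hα0 : 0 < ℓ₀ / (2 * Jhat - ℓ₀) := div_pos hℓ₀ hden
    have hαle : ℓ₀ / (2 * Jhat - ℓ₀) * (J - ℓ₀) ≤ ℓ₀ := by
      rw [div_mul_eq_mul_div, div_le_iff₀ hden]
      nlinarith
    have hxle : J * (γ * r ^ 2) ≤ J - ℓ₀ := by nlinarith
    have hγ'x : γ' * r ^ 2 < 1 := by
      have heq : γ' * r ^ 2 = (1 + ζ * (ℓ₀ / (2 * Jhat - ℓ₀))) * (γ * r ^ 2) := by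
        rw [hγ']; ring
      rw [heq]
      have hp1 : ζ * (ℓ₀ / (2 * Jhat - ℓ₀)) * (J * (γ * r ^ 2))
          ≤ ζ * (ℓ₀ / (2 * Jhat - ℓ₀)) * (J - ℓ₀) :=
        mul_le_mul_of_nonneg_left hxle (mul_pos hζ.1 hα0).le
      have hp2 : ζ * (ℓ₀ / (2 * Jhat - ℓ₀) * (J - ℓ₀)) ≤ ζ * ℓ₀ :=
        mul_le_mul_of_nonneg_left hαle hζ.1.le
      have hp3 : ζ * ℓ₀ < ℓ₀ := mul_lt_of_lt_one_left hℓ₀ hζ.2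
      rw [show ζ * (ℓ₀ / (2 * Jhat - ℓ₀)) * (J - ℓ₀)
          = ζ * (ℓ₀ / (2 * Jhat - ℓ₀) * (J - ℓ₀)) from by ring] at hp1
      have hkey : J * ((1 + ζ * (ℓ₀ / (2 * Jhat - ℓ₀))) * (γ * r ^ 2)) < J * 1 := by
        have e1 : J * ((1 + ζ * (ℓ₀ / (2 * Jhat - ℓ₀))) * (γ * r ^ 2))
            = J * (γ * r ^ 2) + ζ * (ℓ₀ / (2 * Jhat - ℓ₀)) * (J * (γ * r ^ 2)) := by ring
        rw [e1, mul_one]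
        linarith [hp1, hp2, hp3, hxle]
      exact lt_of_mul_lt_mul_left hkey hJ0.le
    have hγ'0 : 0 ≤ γ' := by
      rw [hγ']
      have h1c : 0 < 1 + ζ * (ℓ₀ / (2 * Jhat - ℓ₀)) := by
        have := mul_pos hζ.1 hα0; linarith
      exact (mul_pos h1c hγ0).le
    have hsq : (Real.sqrt γ' * r) ^ 2 < 1 ^ 2 := by
      rw [mul_pow, Real.sq_sqrt hγ'0, one_pow]; exact hγ'x
    exact lt_of_pow_lt_pow_left₀ 2 zero_le_one hsq
  · exfalso
    have h0 : Jcost A B C Q R γ K = 0 := by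
      rw [hJf, tsum_eq_zero_of_not_summable hsum, Matrix.trace_zero]
    rw [h0] at hJ
    linarith
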